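/- Let G and G' be finite abelian groups of the same order with normalized character tables 𝒞 and 𝒞' respectively. Fix group isomorphisms φ : Ĝ → G and φ' : Ĝ' → G', and let Φ be the G × Ĝ permutation matrix with Φ_{a,χ} = 1 iff a = φ(χ), and Φ' the analogous G' × Ĝ' matrix for φ'. Then for every π ∈ bij(G,G'), setting π̂ := φ⁻¹ ∘ π ∘ φ' ∈ bij(Ĝ,Ĝ'), U^{π̂} := 𝒞†·P^{π̂}·𝒞', and Q^{π̂} := U^{π̂} ∘ conj(U^{π̂}) (entrywise product), one has Q^{π̂} = 𝒞†·Φ†·D^π·Φ'·𝒞'. -/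

import Mathlib

open scoped BigOperators Classical

/-- A winning correlation for the `(G,G')`-bijection game: nonnegative values,
the outputs sum to one for each pair of inputs, and the value is zero whenever
exactly one of `b = d` and `a = c` holds. -/
def IsWinningCorrelation {G G' : Type*} [Group G] [Group G'] [Fintype G] [Fintype G']
    (p : G → G → G' → G' → ℝ) : Prop :=
  (∀ (b d : G) (a c : G'), 0 ≤ p b d a c) ∧
  (∀ a c : G', (∑ b : G, ∑ d : G, p b d a c) = 1) ∧
  (∀ (b d : G) (a c : G'), ¬(b = d ↔ a = c) → p b d a c = 0)

/-- Membership in `B̂(G,G')`: a winning correlation whose sum over all pairs of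
inputs is `1` for every pair of outputs. -/
def MemBhat {G G' : Type*} [Group G] [Group G'] [Fintype G] [Fintype G']
    (p : G → G → G' → G' → ℝ) : Prop :=
  IsWinningCorrelation p ∧ ∀ b d : G, (∑ a : G', ∑ c : G', p b d a c) = 1

/-- A `(G,G')`-invariant correlation: an element of `B̂(G,G')` whose values depend only
on the quotients `b⁻¹ * d ∈ G` and `a⁻¹ * c ∈ G'`. -/
def IsInvariantCorrelation {G G' : Type*} [Group G] [Group G'] [Fintype G] [Fintype G']
    (p : G → G → G' → G' → ℝ) : Prop :=
  MemBhat p ∧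
  ∀ (b d b' d' : G) (a c a' c' : G'),
    b⁻¹ * d = b'⁻¹ * d' → a⁻¹ * c = a'⁻¹ * c' → p b d a c = p b' d' a' c'

/-- The correlation `p_G`. -/
noncomputable def pUnif (G : Type*) [Group G] [Fintype G] : G → G → G → G → ℝ :=
  fun b d a c => if b⁻¹ * d = a⁻¹ * c then ((Fintype.card G : ℝ))⁻¹ else 0

/-- Composition of correlations. -/
def corComp {G G' G'' : Type*} [Fintype G']
    (p₁ : G → G → G' → G' → ℝ) (p₂ : G' → G' → G'' → G'' → ℝ) :
    G → G → G'' → G'' → ℝ :=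
  fun b d a c => ∑ x : G', ∑ y : G', p₁ b d x y * p₂ x y a c

/-- The correlation matrix `D^p` of a `(G,G')`-invariant correlation `p`:
`D^p_{x,y} = |G| ⬝ p(b,d|a,c)` for any `b,d,a,c` with `b⁻¹d = x`, `a⁻¹c = y`
(here realized with `b = a = e`). -/
noncomputable def corrMatrix {G G' : Type*} [Group G] [Group G'] [Fintype G]
    (p : G → G → G' → G' → ℝ) : Matrix G G' ℝ :=
  Matrix.of fun x y => (Fintype.card G : ℝ) * p 1 x 1 y

/-- The deterministic correlation `p_π` associated with a bijection `π` from `G'` to `G`. -/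
noncomputable def detCor {G G' : Type*} (π : G' ≃ G) : G → G → G' → G' → ℝ :=
  fun b d a c => if b = π a ∧ d = π c then 1 else 0

/-- The permutation matrix `P^π` of a bijection `π` from `G'` to `G`. -/
noncomputable def permMatrix {G G' : Type*} (π : G' ≃ G) : Matrix G G' ℝ :=
  Matrix.of fun x y => if x = π y then 1 else 0

/-- The matrix `D^π`: the correlation matrix of the `(G,G')`-invariant correlation
`p_G ∘ p_π ∘ p_{G'}`. -/
noncomputable def Dpi {G G' : Type*} [Group G] [Group G'] [Fintype G] [Fintype G']
    (π : G' ≃ G) : Matrix G G' ℝ :=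
  corrMatrix (corComp (pUnif G) (corComp (detCor π) (pUnif G')))

/-- The normalized character table of a finite abelian group `G`: the `Ĝ × G` matrix
with `(χ, a)` entry `χ(a)/√|G|`, where `Ĝ = G →* ℂˣ` is the character group. -/
noncomputable def charTable (G : Type*) [CommGroup G] [Fintype G] :
    Matrix (G →* ℂˣ) G ℂ :=
  Matrix.of fun χ a => ((χ a : ℂˣ) : ℂ) / (Real.sqrt (Fintype.card G) : ℂ)

/-- The `Ĝ × Ĝ'` permutation matrix of a bijection `π̂` from `Ĝ'` to `Ĝ`. -/
noncomputable def charPermMatrix {G G' : Type*} [CommGroup G] [CommGroup G']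
    (π : (G' →* ℂˣ) ≃ (G →* ℂˣ)) : Matrix (G →* ℂˣ) (G' →* ℂˣ) ℂ :=
  Matrix.of fun χ χ' => if χ = π χ' then 1 else 0

/-- The `G × Ĝ` permutation matrix `Φ` encoding an isomorphism `φ : Ĝ → G`:
`Φ_{a,χ} = 1` iff `a = φ(χ)`. -/
noncomputable def isoMatrix {G : Type*} [CommGroup G]
    (φ : (G →* ℂˣ) ≃* G) : Matrix G (G →* ℂˣ) ℂ :=
  Matrix.of fun a χ => if a = φ χ then 1 else 0

lemma aux_conj_char {G : Type*} [CommGroup G] [Fintype G] (χ : G →* ℂˣ) (a : G) :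
    (starRingEnd ℂ) ((χ a : ℂˣ) : ℂ) = ((χ⁻¹ a : ℂˣ) : ℂ) := by
  have h : ((χ a : ℂˣ) : ℂ) ^ Fintype.card G = 1 := by
    rw [← Units.val_pow_eq_pow_val, ← map_pow, pow_card_eq_one, map_one, Units.val_one]
  have habs : ‖((χ a : ℂˣ):ℂ)‖ = 1 := by
    exact Complex.norm_eq_one_of_pow_eq_one h Fintype.card_ne_zero
  rw [← Complex.inv_eq_conj habs]
  simp

lemma aux_Dpi {G G' : Type*} [CommGroup G] [CommGroup G'] [Fintype G] [Fintype G']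
    (π : G' ≃ G) (g : G) (g' : G') :
    Dpi π g g' = (∑ u : G', if (π u)⁻¹ * π (u * g') = g then (1:ℝ) else 0) /
      (Fintype.card G' : ℝ) := by
  have hT : ∀ x y : G, (∑ u : G', ∑ v : G', detCor π x y u v * pUnif G' u v 1 g')
      = pUnif G' (π.symm x) (π.symm y) 1 g' := by
    intro x y
    have hc : ∀ u v : G', (x = π u ∧ y = π v) ↔ (u = π.symm x ∧ v = π.symm y) := by
      intro u v
      constructor <;> rintro ⟨h1, h2⟩ <;> subst h1 <;> subst h2 <;> simp
    simp only [detCor, boole_mul]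
    simp only [hc]
    rw [Finset.sum_comm]
    simp [ite_and, Finset.sum_ite_eq']
  have h1 : corComp (pUnif G) (corComp (detCor π) (pUnif G')) 1 g 1 g'
      = ∑ u : G', ∑ v : G', pUnif G 1 g (π u) (π v) * pUnif G' u v 1 g' := by
    simp only [corComp, hT]
    rw [← Equiv.sum_comp π (fun x => ∑ y : G, pUnif G 1 g x y * pUnif G' (π.symm x) (π.symm y) 1 g')]
    refine Finset.sum_congr rfl fun u _ => ?_
    rw [← Equiv.sum_comp π (fun y => pUnif G 1 g (π u) y * pUnif G' (π.symm (π u)) (π.symm y) 1 g')]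
    simp
  simp only [Dpi, corrMatrix, Matrix.of_apply, h1, pUnif]
  simp only [inv_one, one_mul, mul_ite, ite_mul, zero_mul, mul_zero]
  rw [Finset.mul_sum, Finset.sum_div]
  refine Finset.sum_congr rfl fun u _ => ?_
  have hcv : ∀ v : G', (u⁻¹ * v = g') ↔ (v = u * g') := by
    intro v; constructor <;> intro h
    · rw [← h]; group
    · subst h; group
  simp only [hcv]
  rw [Finset.sum_ite_eq' Finset.univ (u * g')]
  simp only [Finset.mem_univ, if_true]
  by_cases h : g = (π u)⁻¹ * π (u * g')
  · rw [if_pos h, if_pos (by rw [h])]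
    have : (Fintype.card G' : ℝ) ≠ 0 := Nat.cast_ne_zero.2 Fintype.card_ne_zero
    have hG : (Fintype.card G : ℝ) ≠ 0 := Nat.cast_ne_zero.2 Fintype.card_ne_zero
    field_simp
  · rw [if_neg h, if_neg (fun hh => h hh.symm), mul_zero, zero_div]

set_option maxHeartbeats 1000000 in
/-- With `π̂ = φ⁻¹ ∘ π ∘ φ'`, `U^{π̂} = 𝒞† P^{π̂} 𝒞'` and
`Q^{π̂} = U^{π̂} ∘ conj(U^{π̂})` (entrywise product), one has
`Q^{π̂} = 𝒞† Φ† D^π Φ' 𝒞'`. -/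
theorem stmt16 {G G' : Type*} [CommGroup G] [CommGroup G'] [Fintype G] [Fintype G']
    [Fintype (G →* ℂˣ)] [Fintype (G' →* ℂˣ)]
    (hcard : Fintype.card G = Fintype.card G')
    (φ : (G →* ℂˣ) ≃* G) (φ' : (G' →* ℂˣ) ≃* G')
    (π : G' ≃ G) :
    (Matrix.of fun x y =>
        ((charTable G).conjTranspose *
            charPermMatrix (φ'.toEquiv.trans (π.trans φ.toEquiv.symm)) * charTable G') x y *
          (starRingEnd ℂ)
            (((charTable G).conjTranspose *
                charPermMatrix (φ'.toEquiv.trans (π.trans φ.toEquiv.symm)) * charTable G') x y)) =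
      (charTable G).conjTranspose * (isoMatrix φ).conjTranspose *
        ((Dpi π).map (fun r : ℝ => (r : ℂ))) * isoMatrix φ' * charTable G' := by
  have hn : (Fintype.card G : ℝ) ≠ 0 := Nat.cast_ne_zero.2 Fintype.card_ne_zero
  have hn' : (Fintype.card G' : ℝ) ≠ 0 := Nat.cast_ne_zero.2 Fintype.card_ne_zero
  set s : ℂ := (Real.sqrt (Fintype.card G) : ℂ) with hs
  set s' : ℂ := (Real.sqrt (Fintype.card G') : ℂ) with hs'
  -- U entry
  have hU : ∀ (x : G) (y : G'),
      ((charTable G).conjTranspose *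
          charPermMatrix (φ'.toEquiv.trans (π.trans φ.toEquiv.symm)) * charTable G') x y
      = (∑ χ' : G' →* ℂˣ, (starRingEnd ℂ) (((φ.symm (π (φ' χ'))) x : ℂˣ) : ℂ) * ((χ' y : ℂˣ):ℂ))
        / (s * s') := by
    intro x y
    simp only [Matrix.mul_apply, charTable, charPermMatrix, Matrix.conjTranspose_apply,
      Matrix.of_apply, mul_ite, mul_one, mul_zero, ite_mul, zero_mul,
      Finset.sum_ite_eq', Finset.sum_ite_eq, Finset.mem_univ, if_true, star_div₀, Complex.star_def]
    simp only [Equiv.trans_apply, MulEquiv.coe_toEquiv, MulEquiv.coe_toEquiv_symm]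
    rw [Finset.sum_div]
    congr 1; ext χ'
    rw [Complex.conj_ofReal]
    have hs0 : s ≠ 0 := by
      rw [hs]
      simp only [ne_eq, Complex.ofReal_eq_zero]
      positivity
    have hs0' : s' ≠ 0 := by
      rw [hs']
      simp only [ne_eq, Complex.ofReal_eq_zero]
      positivity
    field_simp
    rw [mul_assoc, mul_comm]
    rfl
  -- middle matrix entry
  have hM : ∀ (χ : G →* ℂˣ) (χ' : G' →* ℂˣ),
      ((isoMatrix φ).conjTranspose * ((Dpi π).map (fun r : ℝ => (r : ℂ))) * isoMatrix φ') χ χ'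
      = ((Dpi π (φ χ) (φ' χ') : ℝ) : ℂ) := by
    intro χ χ'
    simp [Matrix.mul_apply, isoMatrix, Matrix.conjTranspose_apply, Matrix.map_apply,
      mul_ite, ite_mul, mul_zero, zero_mul, mul_one, one_mul, apply_ite (star : ℂ → ℂ),
      Finset.sum_ite_eq, Finset.sum_ite_eq']
  -- RHS entry
  have hR : ∀ (x : G) (y : G'),
      ((charTable G).conjTranspose * (isoMatrix φ).conjTranspose *
        ((Dpi π).map (fun r : ℝ => (r : ℂ))) * isoMatrix φ' * charTable G') x y
      = (∑ χ' : G' →* ℂˣ, ∑ u : G',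
          (starRingEnd ℂ) (((φ.symm ((π u)⁻¹ * π (u * φ' χ'))) x : ℂˣ) : ℂ) * ((χ' y : ℂˣ):ℂ))
        / (s * s' * (Fintype.card G' : ℝ)) := by
    intro x y
    have hassoc : (charTable G).conjTranspose * (isoMatrix φ).conjTranspose *
        ((Dpi π).map (fun r : ℝ => (r : ℂ))) * isoMatrix φ' * charTable G'
        = (charTable G).conjTranspose * ((isoMatrix φ).conjTranspose *
          ((Dpi π).map (fun r : ℝ => (r : ℂ))) * isoMatrix φ') * charTable G' := by
      simp only [Matrix.mul_assoc]
    rw [hassoc]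
    rw [Matrix.mul_apply]
    rw [Finset.sum_div]
    refine Finset.sum_congr rfl fun χ' _ => ?_
    rw [Matrix.mul_apply, Finset.sum_mul]
    simp only [hM, aux_Dpi, Matrix.conjTranspose_apply, charTable, Matrix.of_apply,
      Complex.star_def]
    -- now: ∑ χ, star (χ x / s) * ((∑ u, ite)/n') * (χ' y / s') = (∑ u, ...)*... / (s*s'*n')
    have key : ∀ χ : G →* ℂˣ,
        (starRingEnd ℂ) (((χ x : ℂˣ):ℂ) / s) *
          ((((∑ u : G', if (π u)⁻¹ * π (u * φ' χ') = φ χ then (1:ℝ) else 0) /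
            (Fintype.card G' : ℝ) : ℝ)) : ℂ) * (((χ' y : ℂˣ):ℂ) / s')
        = (∑ u : G', if χ = φ.symm ((π u)⁻¹ * π (u * φ' χ')) then
            (starRingEnd ℂ) (((φ.symm ((π u)⁻¹ * π (u * φ' χ'))) x : ℂˣ) : ℂ) * ((χ' y : ℂˣ):ℂ)
            else 0) / (s * s' * (Fintype.card G' : ℝ)) := by
      intro χ
      rw [Complex.ofReal_div, Complex.ofReal_natCast]
      push_cast
      rw [Finset.sum_div, Finset.mul_sum, Finset.sum_mul, Finset.sum_div]
      refine Finset.sum_congr rfl fun u _ => ?_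
      have hiff : ((π u)⁻¹ * π (u * φ' χ') = φ χ) ↔ (χ = φ.symm ((π u)⁻¹ * π (u * φ' χ'))) := by
        constructor <;> intro h
        · exact ((MulEquiv.symm_apply_eq φ).mpr h).symm
        · rw [h]; simp
      by_cases h : χ = φ.symm ((π u)⁻¹ * π (u * φ' χ'))
      · rw [if_pos (hiff.2 h), if_pos h, h]
        rw [map_div₀, Complex.conj_ofReal]
        have hs0 : s ≠ 0 := by
          rw [hs]
          simp only [ne_eq, Complex.ofReal_eq_zero]
          positivity
        field_simp
        rw [← hs, Complex.ofReal_one]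
        ring
      · rw [if_neg (fun hh => h (hiff.1 hh)), if_neg h]
        simp
    rw [← hs, ← hs']
    simp only [key]
    rw [← Finset.sum_div]
    congr 1
    rw [Finset.sum_comm]
    refine Finset.sum_congr rfl fun u _ => ?_
    rw [Finset.sum_ite_eq' Finset.univ (φ.symm ((π u)⁻¹ * π (u * φ' χ')))]
    simp
  -- final assembly
  ext x y
  simp only [Matrix.of_apply]
  rw [hU, hR]
  have hs_eq : s = s' := by rw [hs, hs', hcard]
  have hsq : s' * s' = ((Fintype.card G' : ℝ) : ℂ) := by
    rw [hs', ← Complex.ofReal_mul, Real.mul_self_sqrt (Nat.cast_nonneg _)]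
  have hs'ne : s' ≠ 0 := by
    rw [hs']
    simp only [ne_eq, Complex.ofReal_eq_zero]
    positivity
  have hn'c : ((Fintype.card G' : ℝ) : ℂ) ≠ 0 := by
    simpa using hn'
  have key2 :
      (∑ χ' : G' →* ℂˣ, (starRingEnd ℂ) (((φ.symm (π (φ' χ'))) x : ℂˣ) : ℂ) * ((χ' y : ℂˣ):ℂ)) *
        (starRingEnd ℂ)
          (∑ χ' : G' →* ℂˣ, (starRingEnd ℂ) (((φ.symm (π (φ' χ'))) x : ℂˣ) : ℂ) * ((χ' y : ℂˣ):ℂ))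
      = ∑ χ' : G' →* ℂˣ, ∑ u : G',
          (starRingEnd ℂ) (((φ.symm ((π u)⁻¹ * π (u * φ' χ'))) x : ℂˣ) : ℂ) * ((χ' y : ℂˣ):ℂ) := by
    rw [map_sum, Finset.sum_mul_sum]
    rw [Finset.sum_comm]
    conv_rhs => rw [Finset.sum_comm]
    rw [← Equiv.sum_comp φ'.toEquiv (fun u => ∑ σ' : G' →* ℂˣ,
      (starRingEnd ℂ) (((φ.symm ((π u)⁻¹ * π (u * φ' σ'))) x : ℂˣ) : ℂ) * ((σ' y : ℂˣ):ℂ))]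
    refine Finset.sum_congr rfl fun ψ' _ => ?_
    rw [← Equiv.sum_comp (Equiv.mulLeft ψ') (fun χ' : G' →* ℂˣ =>
      ((starRingEnd ℂ) (((φ.symm (π (φ' χ'))) x : ℂˣ) : ℂ) * ((χ' y : ℂˣ):ℂ)) *
        (starRingEnd ℂ) ((starRingEnd ℂ) (((φ.symm (π (φ' ψ'))) x : ℂˣ) : ℂ) * ((ψ' y : ℂˣ):ℂ)))]
    refine Finset.sum_congr rfl fun σ' _ => ?_
    simp only [Equiv.coe_mulLeft, MulEquiv.coe_toEquiv]
    have hco : (φ'.toEquiv ψ' : G') = φ' ψ' := rfl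
    rw [hco, map_mul φ']
    have h1 : φ.symm ((π (φ' ψ'))⁻¹ * π (φ' ψ' * φ' σ'))
        = (φ.symm (π (φ' ψ')))⁻¹ * φ.symm (π (φ' ψ' * φ' σ')) := by
      rw [map_mul, map_inv]
    rw [h1]
    simp only [map_mul, RingHomCompTriple.comp_apply, RingHom.id_apply,
      Complex.conj_conj, MonoidHom.mul_apply, MonoidHom.inv_apply, Units.val_mul,
      Units.val_inv_eq_inv_val, aux_conj_char]
    have hy : ((ψ' y : ℂˣ) : ℂ) ≠ 0 := Units.ne_zero _
    field_simp
  have hconj : (starRingEnd ℂ) (((Fintype.card G' : ℝ) : ℂ)) = ((Fintype.card G' : ℝ) : ℂ) :=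
    Complex.conj_ofReal _
  rw [map_div₀, div_mul_div_comm, key2, hs_eq, hsq, hconj]
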